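/- Let d be a natural number and let q ≥ 1 be such that 2^q > d. Then for every natural number n and every N, the polynomials I_{n+2^q, d} and I_{n, d} are equal in MvPolynomial (Fin N) (ZMod 2); that is, as a function of n, the expression I_{n,d} is periodic with period 2^q whenever 2^q > d and q > 0. -/

import Mathlib

open MvPolynomial

/-- The polynomial `I_{n,d}` in `N` variables over `ZMod 2`:
`ε(n-d+1)·h_d + ∑_{j=1}^{d} ε(C(n,j))·h_{d-j}·p_j`. -/
noncomputable def Ipoly (N n d : ℕ) : MvPolynomial (Fin N) (ZMod 2) :=
  C (((n : ℤ) - (d : ℤ) + 1 : ℤ) : ZMod 2) * hsymm (Fin N) (ZMod 2) d +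
    ∑ j ∈ Finset.Icc 1 d,
      C (((n.choose j : ℤ)) : ZMod 2) * hsymm (Fin N) (ZMod 2) (d - j) *
        psum (Fin N) (ZMod 2) j

lemma choose_key (q j n : ℕ) (hq : 1 ≤ q) (hj : j < 2 ^ q) :
    (((n + 2 ^ q).choose j : ℤ) : ZMod 2) = ((n.choose j : ℤ) : ZMod 2) := by
  haveI : Fact (Nat.Prime 2) := ⟨Nat.prime_two⟩
  have h1 := @Choose.choose_modEq_choose_mul_prod_range_choose (n + 2 ^ q) j 2 _ q
  have h2 := @Choose.choose_modEq_choose_mul_prod_range_choose n j 2 _ q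
  have hjq : j / 2 ^ q = 0 := Nat.div_eq_of_lt hj
  have hdiv : (n + 2 ^ q) / 2 ^ q = n / 2 ^ q + 1 := by
    rw [Nat.add_div_right _ (pow_pos (by norm_num : (0:ℕ) < 2) q)]
  have hprod : ∀ i ∈ Finset.range q,
      ((n + 2 ^ q) / 2 ^ i % 2).choose (j / 2 ^ i % 2) =
        (n / 2 ^ i % 2).choose (j / 2 ^ i % 2) := by
    intro i hi
    rw [Finset.mem_range] at hi
    have hpow : 2 ^ q = 2 ^ i * 2 ^ (q - i) := by
      rw [← pow_add]; congr 1; omega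
    have : (n + 2 ^ q) / 2 ^ i = n / 2 ^ i + 2 ^ (q - i) := by
      rw [hpow, Nat.add_mul_div_left _ _ (pow_pos (by norm_num : (0:ℕ) < 2) i)]
    rw [this]
    have h2m : 2 ^ (q - i) % 2 = 0 := by
      have h0 : q - i ≠ 0 := by omega
      simp [Nat.pow_mod, h0]
    rw [Nat.add_mod, h2m, Nat.add_zero, Nat.mod_mod_of_dvd _ (by norm_num)]
  rw [ZMod.intCast_eq_intCast_iff]
  refine h1.trans (Int.ModEq.trans ?_ h2.symm)
  rw [hdiv, hjq, Nat.choose_zero_right, Nat.choose_zero_right,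
    Finset.prod_congr rfl hprod]

theorem stmt_5 (d q : ℕ) (hq : 1 ≤ q) (hd : d < 2 ^ q) (n N : ℕ) :
    Ipoly N (n + 2 ^ q) d = Ipoly N n d := by
  unfold Ipoly
  refine congrArg₂ (· + ·) ?_ ?_
  · congr 1
    have h2 : ((2 : ZMod 2)) = 0 := by decide
    push_cast
    rw [h2, zero_pow (by omega : q ≠ 0)]
    ring
  · refine Finset.sum_congr rfl fun j hj => ?_
    rw [Finset.mem_Icc] at hj
    rw [choose_key q j n hq (lt_of_le_of_lt hj.2 hd)]
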